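/- Correctness of the forward-backward decomposition: for every t ∈ [1, T] and inventory level i, f(t, i) + f_r(t, i) is a lower bound on the cost of any feasible solution of (L) with I_t = i, and min over i of f(t, i) + f_r(t, i) equals the optimal cost of (L). Consequently the filtering rule "if f(t, i) + f_r(t, i) > C̅ then I_t ≠ i" is sound: it removes only values i not attained by any feasible solution of cost at most C̅. -/

import Mathlib

/-- Feasibility for `(L)` (no lower bounds). -/
def Feasible (T : ℕ) (d ahi bhi : ℕ → ℕ) (X I : ℕ → ℕ) : Prop :=
  I 0 = 0 ∧ I T = 0 ∧
  ∀ t ∈ Finset.Icc 1 T, I (t - 1) + X t = d t + I t ∧ X t ≤ ahi t ∧ I t ≤ bhi t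

/-- Total cost over periods `1..T`. -/
def planCost (T : ℕ) (p h s : ℕ → ℕ) (X I : ℕ → ℕ) : ℕ :=
  ∑ t ∈ Finset.Icc 1 T, (p t * X t + h t * I t + if 0 < X t then s t else 0)

/-- Forward DP value `f(t, i)`: minimum cost over periods `1..t` of satisfying
demands `d_1..d_t` with ending inventory `i` (infimum in `ℕ∞`, `⊤` if none). -/
noncomputable def fwdCost (d p h s ahi bhi : ℕ → ℕ) (t i : ℕ) : ℕ∞ :=
  sInf {c : ℕ∞ | ∃ X I : ℕ → ℕ, I 0 = 0 ∧ I t = i ∧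
    (∀ r ∈ Finset.Icc 1 t, I (r - 1) + X r = d r + I r ∧ X r ≤ ahi r ∧ I r ≤ bhi r) ∧
    c = ((∑ r ∈ Finset.Icc 1 t,
      (p r * X r + h r * I r + if 0 < X r then s r else 0) : ℕ) : ℕ∞)}

/-- Backward DP value `f_r(t, i)`: minimum cost over periods `t+1..T` of
satisfying demands `d_{t+1}..d_T` with starting inventory `i` and `I T = 0`. -/
noncomputable def bwdCost (T : ℕ) (d p h s ahi bhi : ℕ → ℕ) (t i : ℕ) : ℕ∞ :=
  sInf {c : ℕ∞ | ∃ X I : ℕ → ℕ, I t = i ∧ I T = 0 ∧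
    (∀ r ∈ Finset.Icc (t + 1) T, I (r - 1) + X r = d r + I r ∧ X r ≤ ahi r ∧ I r ≤ bhi r) ∧
    c = ((∑ r ∈ Finset.Icc (t + 1) T,
      (p r * X r + h r * I r + if 0 < X r then s r else 0) : ℕ) : ℕ∞)}

private lemma sum_split (T t : ℕ) (htT : t ≤ T) (g : ℕ → ℕ) :
    ∑ r ∈ Finset.Icc 1 T, g r =
      (∑ r ∈ Finset.Icc 1 t, g r) + ∑ r ∈ Finset.Icc (t + 1) T, g r := by
  have e : ∀ n : ℕ, Finset.Icc 1 n = Finset.Ioc 0 n := fun n => by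
    rw [← Finset.Icc_add_one_left_eq_Ioc]; rfl
  rw [e, e, Finset.Icc_add_one_left_eq_Ioc]
  exact (Finset.sum_Ioc_consecutive g (Nat.zero_le t) htT).symm

/-- Correctness of the forward–backward decomposition: `f(t,i) + f_r(t,i)` is a
lower bound on the cost of any feasible solution of `(L)` with `I t = i`; the
minimum over `i` of `f(t,i) + f_r(t,i)` equals the optimal cost of `(L)`; and
the filtering rule "`f(t,i) + f_r(t,i) > C̅ ⟹ I t ≠ i`" is sound. -/
theorem forward_backward_decomposition_correct
    (T : ℕ) (d p h s ahi bhi : ℕ → ℕ) (t : ℕ) (ht : t ∈ Finset.Icc 1 T) :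
    (∀ X I : ℕ → ℕ, Feasible T d ahi bhi X I →
      fwdCost d p h s ahi bhi t (I t) + bwdCost T d p h s ahi bhi t (I t) ≤
        (planCost T p h s X I : ℕ∞)) ∧
    ((⨅ i : ℕ, fwdCost d p h s ahi bhi t i + bwdCost T d p h s ahi bhi t i) =
      sInf {c : ℕ∞ | ∃ X I : ℕ → ℕ, Feasible T d ahi bhi X I ∧
        c = (planCost T p h s X I : ℕ∞)}) ∧
    (∀ (Cbar : ℕ) (i : ℕ),
      (Cbar : ℕ∞) < fwdCost d p h s ahi bhi t i + bwdCost T d p h s ahi bhi t i →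
      ¬ ∃ X I : ℕ → ℕ, Feasible T d ahi bhi X I ∧ I t = i ∧
        planCost T p h s X I ≤ Cbar) := by
  rw [Finset.mem_Icc] at ht
  obtain ⟨ht1, htT⟩ := ht
  have part1 : ∀ X I : ℕ → ℕ, Feasible T d ahi bhi X I →
      fwdCost d p h s ahi bhi t (I t) + bwdCost T d p h s ahi bhi t (I t) ≤
        (planCost T p h s X I : ℕ∞) := by
    intro X I hF
    obtain ⟨hI0, hIT, hcons⟩ := hF
    have h1 : fwdCost d p h s ahi bhi t (I t) ≤
        ((∑ r ∈ Finset.Icc 1 t,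
          (p r * X r + h r * I r + if 0 < X r then s r else 0) : ℕ) : ℕ∞) := by
      apply sInf_le
      refine ⟨X, I, hI0, rfl, fun r hr => ?_, rfl⟩
      rw [Finset.mem_Icc] at hr
      exact hcons r (Finset.mem_Icc.mpr ⟨hr.1, hr.2.trans htT⟩)
    have h2 : bwdCost T d p h s ahi bhi t (I t) ≤
        ((∑ r ∈ Finset.Icc (t + 1) T,
          (p r * X r + h r * I r + if 0 < X r then s r else 0) : ℕ) : ℕ∞) := by
      apply sInf_le
      refine ⟨X, I, rfl, hIT, fun r hr => ?_, rfl⟩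
      rw [Finset.mem_Icc] at hr
      exact hcons r (Finset.mem_Icc.mpr
        ⟨le_trans (Nat.succ_le_succ (Nat.zero_le t)) hr.1, hr.2⟩)
    have hsplit : planCost T p h s X I =
        (∑ r ∈ Finset.Icc 1 t, (p r * X r + h r * I r + if 0 < X r then s r else 0)) +
        ∑ r ∈ Finset.Icc (t + 1) T, (p r * X r + h r * I r + if 0 < X r then s r else 0) :=
      sum_split T t htT _
    rw [hsplit, Nat.cast_add]
    exact add_le_add h1 h2
  refine ⟨part1, ?_, ?_⟩
  · refine le_antisymm (le_sInf ?_) (le_iInf ?_)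
    · rintro c ⟨X, I, hF, rfl⟩
      exact (iInf_le _ (I t)).trans (part1 X I hF)
    · intro i
      by_cases hA : {c : ℕ∞ | ∃ X I : ℕ → ℕ, I 0 = 0 ∧ I t = i ∧
          (∀ r ∈ Finset.Icc 1 t, I (r - 1) + X r = d r + I r ∧ X r ≤ ahi r ∧ I r ≤ bhi r) ∧
          c = ((∑ r ∈ Finset.Icc 1 t,
            (p r * X r + h r * I r + if 0 < X r then s r else 0) : ℕ) : ℕ∞)}.Nonempty
      swap
      · rw [Set.not_nonempty_iff_eq_empty] at hA
        have : fwdCost d p h s ahi bhi t i = ⊤ := by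
          rw [fwdCost, hA, sInf_empty]
        simp [this]
      by_cases hB : {c : ℕ∞ | ∃ X I : ℕ → ℕ, I t = i ∧ I T = 0 ∧
          (∀ r ∈ Finset.Icc (t + 1) T,
            I (r - 1) + X r = d r + I r ∧ X r ≤ ahi r ∧ I r ≤ bhi r) ∧
          c = ((∑ r ∈ Finset.Icc (t + 1) T,
            (p r * X r + h r * I r + if 0 < X r then s r else 0) : ℕ) : ℕ∞)}.Nonempty
      swap
      · rw [Set.not_nonempty_iff_eq_empty] at hB
        have : bwdCost T d p h s ahi bhi t i = ⊤ := by
          rw [bwdCost, hB, sInf_empty]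
        simp [this]
      obtain ⟨X1, I1, h10, h1t, hc1, hceq1⟩ := csInf_mem hA
      obtain ⟨X2, I2, h2t, h2T, hc2, hceq2⟩ := csInf_mem hB
      set X' : ℕ → ℕ := fun r => if r ≤ t then X1 r else X2 r with hX'
      set I' : ℕ → ℕ := fun r => if r ≤ t then I1 r else I2 r with hI'
      have hfeas : Feasible T d ahi bhi X' I' := by
        refine ⟨by simp [hI', Nat.zero_le, h10], ?_, ?_⟩
        · by_cases hTt : T ≤ t
          · have hEq : t = T := le_antisymm htT hTt
            simp only [hI', if_pos hTt]
            rw [← hEq, h1t, ← h2t, hEq, h2T]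
          · simp [hI', hTt, h2T]
        · intro r hr
          rw [Finset.mem_Icc] at hr
          rcases le_or_gt r t with hrt | hrt
          · have hr1 : r - 1 ≤ t := le_trans (Nat.sub_le r 1) hrt
            have hXr : X' r = X1 r := by simp [hX', hrt]
            have hIr : I' r = I1 r := by simp [hI', hrt]
            have hIr1 : I' (r - 1) = I1 (r - 1) := by simp [hI', hr1]
            rw [hXr, hIr, hIr1]
            exact hc1 r (Finset.mem_Icc.mpr ⟨hr.1, hrt⟩)
          · have hrt' : ¬ r ≤ t := not_le.mpr hrt
            have := hc2 r (Finset.mem_Icc.mpr ⟨hrt, hr.2⟩)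
            have hI'pred : I' (r - 1) = I2 (r - 1) := by
              by_cases hr1 : r - 1 ≤ t
              · have h1' : t ≤ r - 1 := Nat.le_sub_one_of_lt hrt
                have hEq : r - 1 = t := le_antisymm hr1 h1'
                simp [hI', hEq, h1t, h2t]
              · simp [hI', hr1]
            have hXr : X' r = X2 r := by simp [hX', hrt']
            have hIr : I' r = I2 r := by simp [hI', hrt']
            rw [hXr, hIr, hI'pred]
            exact this
      have hcost : planCost T p h s X' I' =
          (∑ r ∈ Finset.Icc 1 t,
            (p r * X1 r + h r * I1 r + if 0 < X1 r then s r else 0)) +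
          ∑ r ∈ Finset.Icc (t + 1) T,
            (p r * X2 r + h r * I2 r + if 0 < X2 r then s r else 0) := by
        rw [planCost, sum_split T t htT]
        congr 1
        · refine Finset.sum_congr rfl fun r hr => ?_
          rw [Finset.mem_Icc] at hr
          simp [hX', hI', if_pos hr.2]
        · refine Finset.sum_congr rfl fun r hr => ?_
          rw [Finset.mem_Icc] at hr
          have : ¬ r ≤ t := not_le.mpr hr.1
          simp [hX', hI', if_neg this]
      have hmem : (planCost T p h s X' I' : ℕ∞) ∈
          {c : ℕ∞ | ∃ X I : ℕ → ℕ, Feasible T d ahi bhi X I ∧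
            c = (planCost T p h s X I : ℕ∞)} := ⟨X', I', hfeas, rfl⟩
      refine (sInf_le hmem).trans ?_
      rw [hcost, Nat.cast_add, fwdCost, bwdCost, ← hceq1, ← hceq2]
  · rintro Cbar i hlt ⟨X, I, hF, hIt, hle⟩
    have h1 := part1 X I hF
    rw [hIt] at h1
    exact absurd (h1.trans (Nat.cast_le.mpr hle)) (not_le.mpr hlt)
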